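/- Let g ∈ L¹(ℝ) be even with bounded derivatives up to order 3 on [−1,1], and θ_g(z) = (1/2π) η_g(e^{iz(·)}) its associated holomorphic function, continuously extended to the closed strip {|Im z| ≤ 2}. Then for all x ∈ ℝ: i·Im θ_g(x − 2i) − θ_g(x) = (1/2π) η̃_g(e^{ix(·)}), where η̃_g is the principal value distribution associated to g(k)/k. -/

import Mathlib

open MeasureTheory Complex
set_option maxHeartbeats 1000000


theorem cosh_lb (k : ℝ) (hk : 0 ≤ k) : 2*k^2 ≤ Real.cosh (2*k) - 1 := by
  have h1 : Real.cosh (2*k) = 2 * Real.sinh k ^2 + 1 := by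
    rw [Real.cosh_two_mul, Real.cosh_sq]; ring
  have h2 : k ≤ Real.sinh k := Real.self_le_sinh_iff.2 hk
  nlinarith

theorem E_small (w : ℂ) (hw : ‖w‖ ≤ 1) :
    ‖Complex.exp w - Complex.exp (-w) - 2*w‖ ≤ ‖w‖ ^ 3 := by
  have h1 := Complex.exp_bound hw (by norm_num : 0 < 3)
  have hw' : ‖-w‖ ≤ 1 := by simpa using hw
  have h2 := Complex.exp_bound hw' (by norm_num : 0 < 3)
  simp [Finset.sum_range_succ, Nat.factorial] at h1 h2
  have key : ‖Complex.exp w - Complex.exp (-w) - 2*w‖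
      ≤ ‖Complex.exp w - (1 + w + w^2/2)‖ + ‖Complex.exp (-w) - (1 + -w + w^2/2)‖ := by
    have h : Complex.exp w - Complex.exp (-w) - 2*w
        = (Complex.exp w - (1 + w + w^2/2)) - (Complex.exp (-w) - (1 + -w + w^2/2)) := by ring
    rw [h]
    exact norm_sub_le _ _
  nlinarith [pow_nonneg (norm_nonneg w) 3]

theorem integrable_F {g : ℝ → ℝ} (hg : Integrable g) {C : ℝ}
    (hC : ∀ y ∈ Set.Icc (-1:ℝ) 1, |g y| ≤ C) (z : ℂ) (hz : |z.im| ≤ 2) :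
    IntegrableOn (fun k : ℝ =>
      ((g k / (k * (Real.cosh (2 * k) - 1)) : ℝ) : ℂ) *
        (Complex.exp (Complex.I * z * k) - Complex.exp (-(Complex.I * z * k)) -
          2 * Complex.I * z * k)) (Set.Ioi 0) := by
  set a := ‖z‖ with ha
  have ha0 : 0 ≤ a := norm_nonneg z
  set δ : ℝ := min 1 (a + 1)⁻¹ with hδdef
  have hδ0 : 0 < δ := lt_min one_pos (by positivity)
  have hδ1 : δ ≤ 1 := min_le_left _ _
  have hδa : δ * a ≤ 1 := by
    have h1 : δ ≤ (a+1)⁻¹ := min_le_right _ _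
    have : δ * a ≤ (a+1)⁻¹ * a := by nlinarith
    have h2 : (a+1)⁻¹ * a ≤ 1 := by
      rw [inv_mul_le_iff₀ (by positivity)]; nlinarith
    linarith
  -- measurability
  have hmeas : AEStronglyMeasurable (fun k : ℝ =>
      ((g k / (k * (Real.cosh (2 * k) - 1)) : ℝ) : ℂ) *
        (Complex.exp (Complex.I * z * k) - Complex.exp (-(Complex.I * z * k)) -
          2 * Complex.I * z * k)) volume := by
    apply AEStronglyMeasurable.mul
    · apply Complex.continuous_ofReal.comp_aestronglyMeasurable
      have hd : Measurable fun k : ℝ => k * (Real.cosh (2*k) - 1) := by fun_prop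
      exact (hg.1.aemeasurable.div hd.aemeasurable).aestronglyMeasurable
    · apply Continuous.aestronglyMeasurable
      fun_prop
  have hsplit : Set.Ioc (0:ℝ) δ ∪ Set.Ioi δ = Set.Ioi 0 :=
    Set.Ioc_union_Ioi_eq_Ioi (le_of_lt hδ0)
  rw [← hsplit]
  apply IntegrableOn.union
  · -- small interval: bounded
    apply Integrable.mono' (integrable_const (C * a^3 / 2) :
      IntegrableOn (fun _ => C * a^3 / 2) (Set.Ioc 0 δ) volume) hmeas.restrict
    filter_upwards [ae_restrict_mem measurableSet_Ioc] with k hk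
    obtain ⟨hk0, hkδ⟩ := hk
    have hk1 : k ≤ 1 := le_trans hkδ hδ1
    have hgC : |g k| ≤ C := hC k ⟨by linarith, hk1⟩
    have hcosh : 2*k^2 ≤ Real.cosh (2*k) - 1 := cosh_lb k (le_of_lt hk0)
    have hden : 2*k^3 ≤ k * (Real.cosh (2*k) - 1) := by nlinarith
    have hcpos0 : 0 < Real.cosh (2*k) - 1 := by nlinarith
    have hdenpos : 0 < k * (Real.cosh (2*k) - 1) := mul_pos hk0 hcpos0
    have hwabs : ‖Complex.I * z * k‖ = a * k := by
      rw [norm_mul, norm_mul, Complex.norm_I, Complex.norm_real, Real.norm_eq_abs, abs_of_pos hk0]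
      ring
    have hwle : ‖Complex.I * z * k‖ ≤ 1 := by
      rw [hwabs]
      calc a * k ≤ a * δ := by nlinarith
        _ ≤ 1 := by nlinarith
    have hE : ‖Complex.exp (Complex.I * z * k) -
        Complex.exp (-(Complex.I * z * k)) - 2 * (Complex.I * z * k)‖ ≤ (a*k)^3 := by
      have := E_small _ hwle
      rw [hwabs] at this
      exact this
    rw [norm_mul, Complex.norm_real, Real.norm_eq_abs]
    have h2 : (2 : ℂ) * Complex.I * z * k = 2 * (Complex.I * z * k) := by ring
    rw [h2]
    have hq : |g k / (k * (Real.cosh (2*k) - 1))| = |g k| / (k * (Real.cosh (2*k) - 1)) := by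
      rw [abs_div, abs_of_pos hdenpos]
    rw [hq]
    have hC0 : 0 ≤ C := le_trans (abs_nonneg _) hgC
    calc |g k| / (k * (Real.cosh (2*k) - 1)) *
          ‖Complex.exp (Complex.I * z * k) - Complex.exp (-(Complex.I * z * k)) - 2 * (Complex.I * z * k)‖
        ≤ (C / (2*k^3)) * ((a*k)^3) := by
          apply mul_le_mul
          · apply div_le_div₀ hC0 hgC (by positivity) hden
          · exact hE
          · exact norm_nonneg _
          · positivity
      _ = C * a^3 / 2 := by field_simp
  · -- tail : compare with M * |g|
    set d0 : ℝ := Real.cosh (2*δ) - 1 with hd0def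
    have hd0 : 0 < d0 := by
      have := Real.one_lt_cosh.2 (show 2*δ ≠ 0 by positivity)
      simp only [hd0def]; linarith
    set M : ℝ := 4*(d0+1)*(a+1)/(δ*d0) with hM
    apply Integrable.mono' ((hg.abs.const_mul M).integrableOn :
      IntegrableOn (fun k => M * |g k|) (Set.Ioi δ) volume) hmeas.restrict
    filter_upwards [ae_restrict_mem measurableSet_Ioi] with k hk
    have hkδ : δ < k := hk
    have hk0 : 0 < k := lt_trans hδ0 hkδ
    have hcosh : d0 ≤ Real.cosh (2*k) - 1 := by
      have : Real.cosh (2*δ) ≤ Real.cosh (2*k) := by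
        rw [Real.cosh_le_cosh]
        rw [abs_of_pos (by positivity), abs_of_pos (by positivity)]
        linarith
      simp only [hd0def]; linarith
    set c : ℝ := Real.cosh (2*k) - 1 with hcdef
    have hcpos : 0 < c := lt_of_lt_of_le hd0 hcosh
    -- bound on the exponential factor
    have habs1 : ‖Complex.exp (Complex.I * z * k)‖ ≤ Real.exp (2*k) := by
      rw [Complex.norm_exp]
      apply Real.exp_le_exp.2
      have : (Complex.I * z * k).re = -z.im * k := by simp [Complex.mul_re]
      rw [this]
      have := abs_le.1 hz
      nlinarith
    have habs2 : ‖Complex.exp (-(Complex.I * z * k))‖ ≤ Real.exp (2*k) := by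
      rw [Complex.norm_exp]
      apply Real.exp_le_exp.2
      have : (-(Complex.I * z * k)).re = z.im * k := by simp [Complex.mul_re]
      rw [this]
      have := abs_le.1 hz
      nlinarith
    have habs3 : ‖2 * Complex.I * z * k‖ = 2 * a * k := by
      rw [norm_mul, norm_mul, norm_mul, Complex.norm_I, Complex.norm_real, Real.norm_eq_abs, Complex.norm_two,
        abs_of_pos hk0]
      ring
    have hexpc : Real.exp (2*k) ≤ 2*c + 2 := by
      have h1 : Real.exp (2*k) ≤ 2 * Real.cosh (2*k) := by
        rw [Real.cosh_eq]
        have := Real.exp_pos (-(2*k))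
        linarith
      simp only [hcdef]; linarith
    have hE : ‖Complex.exp (Complex.I * z * k) -
        Complex.exp (-(Complex.I * z * k)) - 2 * Complex.I * z * k‖ ≤ 2*(2*c+2) + 2*a*k := by
      calc ‖Complex.exp (Complex.I * z * k) -
            Complex.exp (-(Complex.I * z * k)) - 2 * Complex.I * z * k‖
          ≤ ‖Complex.exp (Complex.I * z * k)‖ +
            ‖Complex.exp (-(Complex.I * z * k))‖ +
            ‖2 * Complex.I * z * k‖ := by
            exact le_trans (norm_sub_le _ _) (by gcongr; exact norm_sub_le _ _)
        _ ≤ 2*(2*c+2) + 2*a*k := by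
            rw [habs3]
            nlinarith
    clear_value a δ d0 c M
    have hfrac : (2*(2*c+2) + 2*a*k) ≤ M * (k * c) := by
      rw [hM, div_mul_eq_mul_div, le_div_iff₀ (by positivity)]
      have p1 : c*δ ≤ k*c := by nlinarith
      have q1 : 4*(c*δ)*d0 ≤ 4*(k*c)*d0 := by nlinarith
      have p2 : δ*d0 ≤ k*c := mul_le_mul (le_of_lt hkδ) hcosh (le_of_lt hd0) (le_of_lt hk0)
      have q2 : 4*(δ*d0) ≤ 4*(k*c) := by linarith
      have p3 : δ*d0 ≤ c := le_trans (by nlinarith) hcosh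
      have q3 : 2*a*k*(δ*d0) ≤ 2*a*k*c := by
        apply mul_le_mul_of_nonneg_left p3
        positivity
      nlinarith [mul_nonneg (mul_nonneg ha0 (le_of_lt hk0)) (le_of_lt hcpos),
        mul_nonneg (mul_nonneg (mul_nonneg (le_of_lt hd0) ha0) (le_of_lt hk0)) (le_of_lt hcpos)]
    rw [norm_mul, Complex.norm_real, Real.norm_eq_abs]
    have hq : |g k / (k * c)| = |g k| / (k * c) := by
      rw [abs_div, abs_of_pos (mul_pos hk0 hcpos)]
    rw [hq, div_mul_eq_mul_div, div_le_iff₀ (by positivity)]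
    calc |g k| * ‖Complex.exp (Complex.I * z * k) -
            Complex.exp (-(Complex.I * z * k)) - 2 * Complex.I * z * k‖
        ≤ |g k| * (M * (k*c)) := by
          apply mul_le_mul_of_nonneg_left (le_trans hE hfrac) (abs_nonneg _)
      _ = M * |g k| * (k * c) := by ring


theorem pointwise_id (g : ℝ → ℝ) (x k : ℝ) (hk : 0 < k) :
    Complex.I * ((((g k / (k * (Real.cosh (2 * k) - 1)) : ℝ) : ℂ) *
        (Complex.exp (Complex.I * ((x:ℂ) - 2*Complex.I) * k) - Complex.exp (-(Complex.I * ((x:ℂ) - 2*Complex.I) * k)) -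
          2 * Complex.I * ((x:ℂ) - 2*Complex.I) * k)).im : ℂ)
      - ((g k / (k * (Real.cosh (2 * k) - 1)) : ℝ) : ℂ) *
        (Complex.exp (Complex.I * (x:ℂ) * k) - Complex.exp (-(Complex.I * (x:ℂ) * k)) -
          2 * Complex.I * (x:ℂ) * k)
    = ((g k / k : ℝ) : ℂ) * (Complex.exp (Complex.I * x * k) - Complex.exp (-(Complex.I * x * k))) := by
  have hcosh : (1:ℝ) < Real.cosh (2*k) := Real.one_lt_cosh.2 (by positivity)
  set r : ℝ := g k / (k * (Real.cosh (2 * k) - 1)) with hr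
  have e1 : Complex.I * ((x:ℂ) - 2*Complex.I) * k = Complex.I * x * k + 2*k := by
    linear_combination (-2*(k:ℂ)) * Complex.I_sq
  have e2 : -(Complex.I * (x:ℂ) * k + 2*(k:ℂ)) = -(Complex.I * x * k) + -(2*(k:ℂ)) := by
    ring
  rw [e1, e2, Complex.exp_add, Complex.exp_add]
  set A := Complex.exp (Complex.I * x * k) with hA
  set B := Complex.exp (-(Complex.I * x * k)) with hB
  set T := Complex.exp (2*(k:ℂ)) with hT
  set Ti := Complex.exp (-(2*(k:ℂ))) with hTi
  have hconjA : (starRingEnd ℂ) A = B := by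
    rw [hA, hB, ← Complex.exp_conj]; congr 1; simp
  have hconjB : (starRingEnd ℂ) B = A := by
    rw [hA, hB, ← Complex.exp_conj]; congr 1; simp
  have h2k : (2*(k:ℂ)) = ((2*k:ℝ):ℂ) := by push_cast; ring
  have hconjT : (starRingEnd ℂ) T = T := by
    rw [hT, h2k, ← Complex.exp_conj, Complex.conj_ofReal]
  have hconjTi : (starRingEnd ℂ) Ti = Ti := by
    rw [hTi, ← Complex.exp_conj, map_neg, h2k, Complex.conj_ofReal]
  have him : ∀ w : ℂ, Complex.I * (w.im : ℂ) = (w - (starRingEnd ℂ) w)/2 := by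
    intro w; apply Complex.ext <;> simp
  rw [him]
  have hcoshC : ((Real.cosh (2*k) : ℝ) : ℂ) = (T + Ti)/2 := by
    rw [Complex.ofReal_cosh, hT, hTi, Complex.cosh]
    norm_cast
  have hk0 : (k:ℝ) ≠ 0 := ne_of_gt hk
  have hcne : Real.cosh (2*k) - 1 ≠ 0 := by linarith
  have hrelR : r * (Real.cosh (2*k) - 1) = g k / k := by
    rw [hr, div_mul_eq_mul_div, mul_div_mul_right _ _ hcne]
  have hrel : (r : ℂ) * (((Real.cosh (2*k) : ℝ) : ℂ) - 1) = ((g k / k : ℝ) : ℂ) := by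
    rw [← Complex.ofReal_one, ← Complex.ofReal_sub, ← Complex.ofReal_mul, hrelR]
  simp only [map_mul, map_sub, map_add, map_ofNat, Complex.conj_ofReal,
    Complex.conj_I, hconjA, hconjB, hconjT, hconjTi]
  linear_combination (A - B) * hrel - ((r:ℂ) * (A - B)) * hcoshC


theorem integrable_F3 {g : ℝ → ℝ} (hg : Integrable g) (x : ℝ) :
    IntegrableOn (fun k : ℝ =>
      ((g k / k : ℝ) : ℂ) *
        (Complex.exp (Complex.I * x * k) - Complex.exp (-(Complex.I * x * k)))) (Set.Ioi 0) := by
  have hmeas : AEStronglyMeasurable (fun k : ℝ =>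
      ((g k / k : ℝ) : ℂ) *
        (Complex.exp (Complex.I * x * k) - Complex.exp (-(Complex.I * x * k)))) volume := by
    apply AEStronglyMeasurable.mul
    · apply Complex.continuous_ofReal.comp_aestronglyMeasurable
      exact (hg.1.aemeasurable.div measurable_id.aemeasurable).aestronglyMeasurable
    · apply Continuous.aestronglyMeasurable
      fun_prop
  apply Integrable.mono' ((hg.abs.const_mul (2*|x|)).integrableOn :
    IntegrableOn (fun k => 2*|x| * |g k|) (Set.Ioi 0) volume) hmeas.restrict
  filter_upwards [ae_restrict_mem measurableSet_Ioi] with k hk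
  have hk0 : (0:ℝ) < k := hk
  have hsin : Complex.exp (Complex.I * x * k) - Complex.exp (-(Complex.I * x * k))
      = 2 * Complex.I * Complex.sin ((x*k : ℝ) : ℂ) := by
    rw [Complex.sin]
    have e1 : -(((x*k : ℝ):ℂ)) * Complex.I = -(Complex.I * x * k) := by push_cast; ring
    have e2 : (((x*k : ℝ):ℂ)) * Complex.I = Complex.I * x * k := by push_cast; ring
    rw [e1, e2]
    linear_combination (Complex.exp (Complex.I * x * k) - Complex.exp (-(Complex.I * x * k))) * Complex.I_sq
  rw [norm_mul, hsin, Complex.norm_real, Real.norm_eq_abs]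
  rw [norm_mul, norm_mul, Complex.norm_I, Complex.norm_two, ← Complex.ofReal_sin,
    Complex.norm_real, Real.norm_eq_abs]
  have hsinle : |Real.sin (x*k)| ≤ |x| * k := by
    calc |Real.sin (x*k)| ≤ |x*k| := Real.abs_sin_le_abs
      _ = |x| * k := by rw [abs_mul, abs_of_pos hk0]
  have hq : |g k / k| = |g k| / k := by
    rw [abs_div, abs_of_pos hk0]
  rw [hq]
  calc |g k| / k * (2 * 1 * |Real.sin (x*k)|) ≤ |g k| / k * (2 * 1 * (|x| * k)) := by
        apply mul_le_mul_of_nonneg_left _ (by positivity)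
        apply mul_le_mul_of_nonneg_left hsinle (by norm_num)
    _ = 2 * |x| * |g k| := by field_simp

/-- `θ_g(z) = (1/2π) η_g(e^{iz(·)})`. -/
noncomputable def theta (g : ℝ → ℝ) (z : ℂ) : ℂ :=
  (1 / (2 * Real.pi)) *
    ∫ k in Set.Ioi (0 : ℝ),
      ((g k / (k * (Real.cosh (2 * k) - 1)) : ℝ) : ℂ) *
        (Complex.exp (Complex.I * z * k) - Complex.exp (-(Complex.I * z * k)) -
          2 * Complex.I * z * k)

theorem theta_boundary_identity (g : ℝ → ℝ) (hg : Integrable g)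
    (heven : ∀ k, g (-k) = g k)
    (hreg : ContDiffOn ℝ 3 g (Set.Icc (-1 : ℝ) 1))
    (hbdd : ∀ j : ℕ, j ≤ 3 → ∃ C : ℝ, ∀ x ∈ Set.Icc (-1 : ℝ) 1,
      |iteratedDeriv j g x| ≤ C) :
    ∀ x : ℝ,
      Complex.I * ((theta g ((x : ℂ) - 2 * Complex.I)).im : ℂ) - theta g (x : ℂ) =
        (1 / (2 * Real.pi)) *
          ∫ k in Set.Ioi (0 : ℝ),
            ((g k / k : ℝ) : ℂ) *
              (Complex.exp (Complex.I * x * k) - Complex.exp (-(Complex.I * x * k))) := by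
  intro x
  obtain ⟨C, hC⟩ := hbdd 0 (by norm_num)
  have hC' : ∀ y ∈ Set.Icc (-1:ℝ) 1, |g y| ≤ C := by
    intro y hy; simpa [iteratedDeriv_zero] using hC y hy
  have hz1 : |((x:ℂ)).im| ≤ 2 := by simp
  have hz2 : |(((x:ℂ) - 2*Complex.I)).im| ≤ 2 := by norm_num
  have h1 := integrable_F hg hC' (x:ℂ) hz1
  have h2 := integrable_F hg hC' ((x:ℂ) - 2*Complex.I) hz2
  have h3 := integrable_F3 hg x
  unfold theta
  set r0 : ℝ := 1/(2*Real.pi) with hr0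
  have hcoef : (1 / (2 * (Real.pi:ℂ))) = ((r0 : ℝ) : ℂ) := by rw [hr0]; push_cast; ring
  rw [hcoef]
  set F2 : ℝ → ℂ := fun k => ((g k / (k * (Real.cosh (2 * k) - 1)) : ℝ) : ℂ) *
        (Complex.exp (Complex.I * ((x:ℂ) - 2*Complex.I) * k) -
          Complex.exp (-(Complex.I * ((x:ℂ) - 2*Complex.I) * k)) -
          2 * Complex.I * ((x:ℂ) - 2*Complex.I) * k) with hF2
  set F1 : ℝ → ℂ := fun k => ((g k / (k * (Real.cosh (2 * k) - 1)) : ℝ) : ℂ) *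
        (Complex.exp (Complex.I * (x:ℂ) * k) - Complex.exp (-(Complex.I * (x:ℂ) * k)) -
          2 * Complex.I * (x:ℂ) * k) with hF1
  set F3 : ℝ → ℂ := fun k => ((g k / k : ℝ) : ℂ) *
        (Complex.exp (Complex.I * (x:ℂ) * k) - Complex.exp (-(Complex.I * (x:ℂ) * k))) with hF3
  have key : Complex.I * (((∫ k in Set.Ioi (0:ℝ), F2 k).im : ℝ) : ℂ)
      - ∫ k in Set.Ioi (0:ℝ), F1 k = ∫ k in Set.Ioi (0:ℝ), F3 k := by
    have him : (∫ k in Set.Ioi (0:ℝ), F2 k).im = ∫ k in Set.Ioi (0:ℝ), (F2 k).im := by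
      have := (integral_im (𝕜 := ℂ) h2).symm
      simpa only [RCLike.im_to_complex] using this
    have hofReal : ((∫ k in Set.Ioi (0:ℝ), (F2 k).im : ℝ) : ℂ)
        = ∫ k in Set.Ioi (0:ℝ), (((F2 k).im : ℝ) : ℂ) := integral_ofReal.symm
    rw [him, hofReal, ← integral_const_mul]
    have hint1 : Integrable (fun k => Complex.I * (((F2 k).im : ℝ) : ℂ))
        (volume.restrict (Set.Ioi (0:ℝ))) := by
      exact (h2.im.ofReal (𝕜 := ℂ)).const_mul Complex.I
    rw [← integral_sub hint1 h1]
    apply setIntegral_congr_fun measurableSet_Ioi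
    intro k hk
    exact pointwise_id g x k hk
  have him2 : ((((r0:ℝ):ℂ) * ∫ k in Set.Ioi (0:ℝ), F2 k).im : ℝ) =
      r0 * (∫ k in Set.Ioi (0:ℝ), F2 k).im := by
    simp [Complex.mul_im]
  rw [him2, Complex.ofReal_mul]
  linear_combination ((r0:ℝ):ℂ) * key
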